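/- Let Y ⊆ ℝ^d be compact, and for each K let Z_K = {z_K^1, …, z_K^K} ⊆ Y be a finite set of points such that the empirical measures (1/K)Σ_k δ_{z_K^k} converge weakly to a measure P_∞ with density ρ_∞ satisfying inf_{y∈Y} ρ_∞(y) > 0. Then the covering radius r_K = max_{y∈Y} min_{k≤K} ‖y − z_K^k‖ converges to 0 as K → ∞. -/

import Mathlib

set_option maxHeartbeats 1000000


open MeasureTheory Real Set Filter Classical in

/-- If Y is compact, every ball around a point of Y meets Y in positive volume,
and the empirical measures of the K-point sets Z_K converge weakly to a measure
with density ρ∞ bounded below on Y by a positive constant, then the covering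
radius r_K = max_{y∈Y} min_k ‖y - z_K^k‖ tends to 0. -/
theorem covering_radius_tendsto_zero (d : ℕ) (hd : 1 ≤ d)
    (Y : Set (EuclideanSpace ℝ (Fin d))) (hYc : IsCompact Y) (hYne : Y.Nonempty)
    (hYball : ∀ y ∈ Y, ∀ ε : ℝ, 0 < ε → 0 < volume (Metric.ball y ε ∩ Y))
    (z : (K : ℕ) → Fin K → EuclideanSpace ℝ (Fin d)) (hz : ∀ K k, z K k ∈ Y)
    (ρ : EuclideanSpace ℝ (Fin d) → ℝ) (hρm : Measurable ρ)
    (m : ℝ) (hm : 0 < m) (hlb : ∀ y ∈ Y, m ≤ ρ y)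
    (hweak : ∀ E : Set (EuclideanSpace ℝ (Fin d)), MeasurableSet E →
      ((volume.restrict Y).withDensity (fun y => ENNReal.ofReal (ρ y)))
          (frontier E) = 0 →
      Tendsto (fun K : ℕ => (1 / (K:ℝ)) * ∑ k : Fin K,
          (if z K k ∈ E then (1:ℝ) else 0)) atTop
        (nhds (((volume.restrict Y).withDensity
          (fun y => ENNReal.ofReal (ρ y))) E).toReal)) :
    Tendsto (fun K : ℕ => ⨆ y : Y, ⨅ k : Fin K, dist (y : EuclideanSpace ℝ (Fin d)) (z K k))
      atTop (nhds 0) := by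
  classical
  haveI : Nontrivial (EuclideanSpace ℝ (Fin d)) := by
    refine ⟨(WithLp.toLp 2 (fun _ => (1:ℝ)) : EuclideanSpace ℝ (Fin d)), (WithLp.toLp 2 (fun _ => (0:ℝ)) : EuclideanSpace ℝ (Fin d)),
      fun h => ?_⟩
    have := congrFun (congrArg WithLp.ofLp h) ⟨0, hd⟩
    norm_num at this
  set P := ((volume.restrict Y).withDensity (fun y => ENNReal.ofReal (ρ y))) with hP
  -- P univ = 1 (in particular finite)
  have huniv : (P univ).toReal = 1 := by
    have h1 := hweak univ MeasurableSet.univ (by simp)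
    refine tendsto_nhds_unique h1 (Tendsto.congr' ?_ tendsto_const_nhds)
    filter_upwards [eventually_ge_atTop 1] with K hK
    have hK0 : (K:ℝ) ≠ 0 := by positivity
    simp [Finset.sum_const, hK0]
  have hPfin : P univ ≠ ⊤ := by
    intro h
    rw [h] at huniv
    simp at huniv
  -- positivity of P on balls around points of Y
  have hball : ∀ y ∈ Y, ∀ ε : ℝ, 0 < ε → 0 < (P (Metric.ball y ε)).toReal := by
    intro y hy ε hε
    have hmeas : MeasurableSet (Metric.ball y ε) := measurableSet_ball
    have h1 : P (Metric.ball y ε) =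
        ∫⁻ x in Metric.ball y ε ∩ Y, ENNReal.ofReal (ρ x) ∂volume := by
      rw [hP, withDensity_apply _ hmeas, Measure.restrict_restrict hmeas]
    have h2 : ENNReal.ofReal m * volume (Metric.ball y ε ∩ Y) ≤ P (Metric.ball y ε) := by
      rw [h1]
      calc ENNReal.ofReal m * volume (Metric.ball y ε ∩ Y)
          = ∫⁻ _ in Metric.ball y ε ∩ Y, ENNReal.ofReal m ∂volume := by
            rw [setLIntegral_const, mul_comm]
        _ ≤ _ := by
            refine setLIntegral_mono (hρm.ennreal_ofReal) fun x hx => ?_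
            exact ENNReal.ofReal_le_ofReal (hlb x hx.2)
    have hpos : 0 < P (Metric.ball y ε) :=
      lt_of_lt_of_le (by
        have := hYball y hy ε hε
        exact ENNReal.mul_pos (by simpa using hm) this.ne' |>.trans_le le_rfl) h2
    have hfin : P (Metric.ball y ε) ≠ ⊤ :=
      (lt_of_le_of_lt (measure_mono (subset_univ _)) (lt_top_iff_ne_top.2 hPfin)).ne
    exact ENNReal.toReal_pos hpos.ne' hfin
  -- frontier of balls has P-measure zero
  have hfront : ∀ (y : EuclideanSpace ℝ (Fin d)) (ε : ℝ), P (frontier (Metric.ball y ε)) = 0 := by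
    intro y ε
    have h1 : volume (frontier (Metric.ball y ε)) = 0 := by
      refine measure_mono_null Metric.frontier_ball_subset_sphere ?_
      exact Measure.addHaar_sphere volume y ε
    have h2 : (volume.restrict Y) (frontier (Metric.ball y ε)) = 0 :=
      measure_mono_null (fun x hx => hx) (by
        rw [Measure.restrict_apply' ?_]
        · exact measure_mono_null (inter_subset_left) h1
        · exact hYc.measurableSet)
    rw [hP, withDensity_apply _ (isClosed_frontier.measurableSet)]
    rw [Measure.restrict_eq_zero.2 h2]
    simp
  -- main argument
  rw [Metric.tendsto_atTop]
  intro ε hε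
  have hε3 : 0 < ε / 3 := by linarith
  -- finite subcover
  obtain ⟨t, ht⟩ := hYc.elim_finite_subcover (fun y : Y => Metric.ball (y : EuclideanSpace ℝ (Fin d)) (ε / 3))
    (fun _ => Metric.isOpen_ball) (fun y hy => mem_iUnion.2 ⟨⟨y, hy⟩, Metric.mem_ball_self hε3⟩)
  -- for each center, eventually some point of Z_K is in the ball
  have key : ∀ᶠ K : ℕ in atTop, ∀ i ∈ t, ∃ k : Fin K, z K k ∈ Metric.ball (i : EuclideanSpace ℝ (Fin d)) (ε / 3) := by
    rw [eventually_all_finset]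
    intro i _
    have htd := hweak (Metric.ball (i : EuclideanSpace ℝ (Fin d)) (ε / 3)) measurableSet_ball (hfront _ _)
    have hpos := hball (i : EuclideanSpace ℝ (Fin d)) i.2 (ε / 3) hε3
    have := htd.eventually (eventually_gt_nhds hpos)
    filter_upwards [this] with K hK
    by_contra h
    push_neg at h
    have hsum : ∑ k : Fin K, (if z K k ∈ Metric.ball (i : EuclideanSpace ℝ (Fin d)) (ε / 3) then (1:ℝ) else 0) = 0 := by
      apply Finset.sum_eq_zero
      intro k _
      simp [h k]
    rw [hsum, mul_zero] at hK
    exact lt_irrefl _ hK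
  rw [← eventually_atTop]
  filter_upwards [key] with K hK
  have hub : ∀ y : Y, (⨅ k : Fin K, dist (y : EuclideanSpace ℝ (Fin d)) (z K k)) ≤ 2 * ε / 3 := by
    intro y
    obtain ⟨i, hi⟩ := mem_iUnion₂.1 (ht y.2)
    obtain ⟨it, hyi⟩ := hi
    obtain ⟨k, hk⟩ := hK i it
    refine le_trans (ciInf_le ⟨0, fun r hr => ?_⟩ k) ?_
    · obtain ⟨j, rfl⟩ := hr
      exact dist_nonneg
    · calc dist (y : EuclideanSpace ℝ (Fin d)) (z K k) ≤ dist (y : EuclideanSpace ℝ (Fin d)) (i : EuclideanSpace ℝ (Fin d)) + dist (i : EuclideanSpace ℝ (Fin d)) (z K k) := dist_triangle _ _ _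
        _ ≤ ε / 3 + ε / 3 := by
            have h1 : dist (y : EuclideanSpace ℝ (Fin d)) (i : EuclideanSpace ℝ (Fin d)) < ε / 3 := hyi
            have h2 : dist (i : EuclideanSpace ℝ (Fin d)) (z K k) < ε / 3 := by
              rw [dist_comm]; exact hk
            linarith
        _ = 2 * ε / 3 := by ring
  have hle : (⨆ y : Y, ⨅ k : Fin K, dist (y : EuclideanSpace ℝ (Fin d)) (z K k)) ≤ 2 * ε / 3 := by
    haveI : Nonempty Y := hYne.to_subtype
    exact ciSup_le hub
  have hnn : 0 ≤ ⨆ y : Y, ⨅ k : Fin K, dist (y : EuclideanSpace ℝ (Fin d)) (z K k) :=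
    Real.iSup_nonneg fun y => Real.iInf_nonneg fun k => dist_nonneg
  rw [Real.dist_eq, sub_zero, abs_of_nonneg hnn]
  linarith
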